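/- Let n ≥ 5 and define μ = (cbrt(√3(n-3) + √(3(n-3)² − 1/27)) + cbrt(√3(n-3) − √(3(n-3)² − 1/27)))². Then μ satisfies the system: there exist positive reals x₁, x₂ with μ·x₁² = x₁² + 2(n-3)·x₁·x₂ and μ·x₂² = 3·x₁². -/
import Mathlib


/-- For n ≥ 5, the number
μ = (cbrt(√3(n-3) + √(3(n-3)² − 1/27)) + cbrt(√3(n-3) − √(3(n-3)² − 1/27)))²
satisfies the eigenvalue system: there are positive reals x₁, x₂ with
μ·x₁² = x₁² + 2(n-3)·x₁·x₂ and μ·x₂² = 3·x₁². (Both cube-root arguments are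
nonnegative, so the real cube root is expressed via rpow (1/3).) -/
theorem stmt15 (n : ℕ) (hn : 5 ≤ n) :
    ∃ x₁ x₂ : ℝ, 0 < x₁ ∧ 0 < x₂ ∧
      ((Real.sqrt 3 * ((n : ℝ) - 3) + Real.sqrt (3 * ((n : ℝ) - 3) ^ 2 - 1 / 27)) ^ ((1 : ℝ) / 3)
        + (Real.sqrt 3 * ((n : ℝ) - 3) - Real.sqrt (3 * ((n : ℝ) - 3) ^ 2 - 1 / 27)) ^ ((1 : ℝ) / 3)) ^ 2
          * x₁ ^ 2 = x₁ ^ 2 + 2 * ((n : ℝ) - 3) * x₁ * x₂ ∧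
      ((Real.sqrt 3 * ((n : ℝ) - 3) + Real.sqrt (3 * ((n : ℝ) - 3) ^ 2 - 1 / 27)) ^ ((1 : ℝ) / 3)
        + (Real.sqrt 3 * ((n : ℝ) - 3) - Real.sqrt (3 * ((n : ℝ) - 3) ^ 2 - 1 / 27)) ^ ((1 : ℝ) / 3)) ^ 2
          * x₂ ^ 2 = 3 * x₁ ^ 2 := by
  set m : ℝ := (n : ℝ) - 3 with hm
  have hm2 : (2 : ℝ) ≤ m := by
    have : (5 : ℝ) ≤ (n : ℝ) := by exact_mod_cast hn
    simp [hm]; linarith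
  have hs3 : (0 : ℝ) < Real.sqrt 3 := Real.sqrt_pos.mpr (by norm_num)
  set s : ℝ := Real.sqrt 3 * m with hs
  set d : ℝ := Real.sqrt (3 * m ^ 2 - 1 / 27) with hd
  have hs2 : s ^ 2 = 3 * m ^ 2 := by
    rw [hs, mul_pow, Real.sq_sqrt (by norm_num : (0:ℝ) ≤ 3)]
  have hdnn : (0 : ℝ) ≤ d := Real.sqrt_nonneg _
  have hd2 : d ^ 2 = 3 * m ^ 2 - 1 / 27 :=
    Real.sq_sqrt (by nlinarith)
  have hspos : 0 < s := by positivity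
  have hds : d ≤ s := by
    nlinarith [hd2, hs2]
  have ha : (0 : ℝ) < s + d := by linarith
  have hb : (0 : ℝ) ≤ s - d := by linarith
  set u : ℝ := (s + d) ^ ((1:ℝ)/3) with hu
  set v : ℝ := (s - d) ^ ((1:ℝ)/3) with hv
  have hu3 : u ^ 3 = s + d := by
    rw [hu, one_div, ← Real.rpow_natCast _ 3, ← Real.rpow_mul ha.le]
    norm_num
  have hv3 : v ^ 3 = s - d := by
    rw [hv, one_div, ← Real.rpow_natCast _ 3, ← Real.rpow_mul hb]
    norm_num
  have huv : u * v = 1 / 3 := by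
    rw [hu, hv, ← Real.mul_rpow ha.le hb]
    have hab : (s + d) * (s - d) = 1 / 27 := by nlinarith [hd2, hs2]
    rw [hab, show (1/27 : ℝ) = (1/3) ^ (3:ℕ) by norm_num,
      ← Real.rpow_natCast ((1:ℝ)/3) 3, ← Real.rpow_mul (by norm_num)]
    norm_num
  have hupos : 0 < u := Real.rpow_pos_of_pos ha _
  have hvnn : 0 ≤ v := Real.rpow_nonneg hb _
  have ht : 0 < u + v := by linarith
  have hcube : (u + v) ^ 3 = (u + v) + 2 * s := by
    have : (u + v) ^ 3 = u ^ 3 + v ^ 3 + 3 * (u * v) * (u + v) := by ring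
    rw [this, hu3, hv3, huv]; ring
  refine ⟨u + v, Real.sqrt 3, ht, hs3, ?_, ?_⟩
  · have : (u + v) * ((u + v) ^ 3) = (u + v) * ((u + v) + 2 * s) := by rw [hcube]
    rw [hs] at this
    nlinarith [this]
  · rw [Real.sq_sqrt (by norm_num : (0:ℝ) ≤ 3)]; ring
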